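/- If a graph G is tough (deleting any finite vertex set leaves finitely many components) but has no ray, then G is finite. Equivalently: every infinite tough graph contains a ray. -/

import Mathlib

open SimpleGraph Set

variable {V : Type*}

/-- The set of components of `G - X` (the subgraph of `G` induced on `Xᶜ`). -/
abbrev Comps (G : SimpleGraph V) (X : Set V) := (G.induce Xᶜ).ConnectedComponent

/-- The vertex set (in `V`) of a component of `G - X`. -/
def suppV (G : SimpleGraph V) (X : Set V) (C : Comps G X) : Set V :=
  Subtype.val '' {v | (G.induce Xᶜ).connectedComponentMk v = C}

/-- The neighbourhood `N(C) ⊆ X` of a component `C` of `G - X`. -/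
def nbhd (G : SimpleGraph V) (X : Set V) (C : Comps G X) : Set V :=
  {x ∈ X | ∃ v ∈ suppV G X C, G.Adj x v}

/-- `C_X(Y)`: the components of `G - X` with neighbourhood exactly `Y`. -/
def compsWithNbhd (G : SimpleGraph V) (X Y : Set V) : Set (Comps G X) :=
  {C | nbhd G X C = Y}

/-- A finite vertex set `Y` is critical if `C_Y(Y)` is infinite. -/
def Critical (G : SimpleGraph V) (Y : Set V) : Prop :=
  Y.Finite ∧ (compsWithNbhd G Y Y).Infinite

/-- Reachability in `G` by a walk avoiding `X`. -/
def Avoid (G : SimpleGraph V) (X : Set V) (u w : V) : Prop :=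
  ∃ p : G.Walk u w, ∀ x ∈ p.support, x ∉ X

lemma Avoid.notMem_left {G : SimpleGraph V} {X : Set V} {u w : V}
    (h : Avoid G X u w) : u ∉ X := by
  obtain ⟨p, hp⟩ := h; exact hp u p.start_mem_support

lemma Avoid.notMem_right {G : SimpleGraph V} {X : Set V} {u w : V}
    (h : Avoid G X u w) : w ∉ X := by
  obtain ⟨p, hp⟩ := h; exact hp w p.end_mem_support

lemma Avoid.symm {G : SimpleGraph V} {X : Set V} {u w : V}
    (h : Avoid G X u w) : Avoid G X w u := by
  obtain ⟨p, hp⟩ := h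
  exact ⟨p.reverse, by
    intro x hx
    rw [SimpleGraph.Walk.support_reverse, List.mem_reverse] at hx
    exact hp x hx⟩

lemma Avoid.trans {G : SimpleGraph V} {X : Set V} {u v w : V}
    (h : Avoid G X u v) (h' : Avoid G X v w) : Avoid G X u w := by
  obtain ⟨p, hp⟩ := h; obtain ⟨q, hq⟩ := h'
  refine ⟨p.append q, fun x hx => ?_⟩
  rw [SimpleGraph.Walk.mem_support_append_iff] at hx
  exact hx.elim (hp x) (hq x)

lemma Avoid.refl {G : SimpleGraph V} {X : Set V} {u : V} (hu : u ∉ X) :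
    Avoid G X u u :=
  ⟨SimpleGraph.Walk.nil, by simp [hu]⟩

/-- Reachability in the induced graph on `Xᶜ` gives avoiding reachability. -/
lemma avoid_of_reachable {G : SimpleGraph V} {X : Set V} {a b : (Xᶜ : Set V)}
    (h : (G.induce Xᶜ).Reachable a b) : Avoid G X a.1 b.1 := by
  obtain ⟨p⟩ := h
  refine ⟨p.map (SimpleGraph.Embedding.induce (Xᶜ : Set V)).toHom, fun x hx => ?_⟩
  erw [SimpleGraph.Walk.support_map, List.mem_map] at hx
  obtain ⟨y, -, rfl⟩ := hx
  exact y.2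

/-- In a tough graph, every infinite set outside a finite `X` meets some infinite
component of `G - X`. -/
lemma exists_infinite_comp {G : SimpleGraph V}
    (htough : ∀ X : Set V, X.Finite → Finite (Comps G X))
    {X : Set V} (hX : X.Finite) {S : Set V} (hS : S.Infinite)
    (hSX : ∀ w ∈ S, w ∉ X) :
    ∃ u ∈ S, {w | Avoid G X u w}.Infinite := by
  haveI := htough X hX
  haveI : Infinite ↥S := hS.to_subtype
  set f : ↥S → Comps G X :=
    fun w => (G.induce Xᶜ).connectedComponentMk ⟨w.1, hSX _ w.2⟩ with hf
  obtain ⟨C, hC⟩ := Finite.exists_infinite_fiber f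
  have hTinf : (Subtype.val '' (f ⁻¹' {C})).Infinite := by
    have : (f ⁻¹' {C} : Set ↥S).Infinite := Set.infinite_coe_iff.mp hC
    exact this.image (Subtype.val_injective.injOn)
  obtain ⟨u, hu⟩ := hTinf.nonempty
  obtain ⟨u', hu', rfl⟩ := hu
  refine ⟨u'.1, u'.2, hTinf.mono ?_⟩
  rintro x ⟨w, hw, rfl⟩
  have h1 : f u' = C := hu'
  have h2 : f w = C := hw
  have := SimpleGraph.ConnectedComponent.exact (h1.trans h2.symm)
  exact avoid_of_reachable this

/-- From an avoiding walk `u → v` with `u ≠ v`, extract a neighbour `w` of `v`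
reachable from `u` avoiding `insert v X`. -/
lemma step_adj {G : SimpleGraph V} {X : Set V} {u v : V}
    (h : Avoid G X u v) (hne : u ≠ v) :
    ∃ w, G.Adj v w ∧ Avoid G (insert v X) u w := by
  obtain ⟨p, hp⟩ := h
  induction p with
  | nil => exact absurd rfl hne
  | @cons a y b hadj q ih =>
    rw [SimpleGraph.Walk.support_cons] at hp
    have ha : a ∉ X := hp a List.mem_cons_self
    have hq : ∀ x ∈ q.support, x ∉ X := fun x hx => hp x (List.mem_cons_of_mem _ hx)
    by_cases hyb : y = b
    · subst hyb
      refine ⟨a, hadj.symm, Avoid.refl ?_⟩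
      simp only [Set.mem_insert_iff, not_or]
      exact ⟨hne, ha⟩
    · obtain ⟨w, hw, haw⟩ := ih hyb hq
      refine ⟨w, hw, Avoid.trans ⟨hadj.toWalk, ?_⟩ haw⟩
      intro x hx
      have hx' : x = a ∨ x = y := by simpa [SimpleGraph.Adj.toWalk] using hx
      rcases hx' with rfl | rfl
      · simp only [Set.mem_insert_iff, not_or]; exact ⟨hne, ha⟩
      · simp only [Set.mem_insert_iff, not_or]
        exact ⟨hyb, hq x q.start_mem_support⟩

/-- A state in the ray construction. -/
structure RayState (G : SimpleGraph V) : Type _ where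
  v : V
  X : Set V
  hX : X.Finite
  hv : v ∉ X
  hinf : {w | Avoid G X v w}.Infinite

lemma RayState.step {G : SimpleGraph V}
    (htough : ∀ X : Set V, X.Finite → Finite (Comps G X)) (s : RayState G) :
    ∃ t : RayState G, t.X = insert s.v s.X ∧ G.Adj s.v t.v := by
  set X' : Set V := insert s.v s.X with hX'
  have hX'fin : X'.Finite := s.hX.insert _
  set S : Set V := {w | Avoid G s.X s.v w} \ {s.v} with hSdef
  have hSinf : S.Infinite := s.hinf.diff (Set.finite_singleton _)
  have hSX' : ∀ w ∈ S, w ∉ X' := by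
    rintro w ⟨hw1, hw2⟩
    simp only [hX', Set.mem_insert_iff, not_or]
    exact ⟨hw2, hw1.notMem_right⟩
  obtain ⟨u, huS, huinf⟩ := exists_infinite_comp htough hX'fin hSinf hSX'
  have huv : Avoid G s.X u s.v := huS.1.symm
  have hune : u ≠ s.v := huS.2
  obtain ⟨z, hz, huz⟩ := step_adj huv hune
  refine ⟨⟨z, X', hX'fin, huz.notMem_right, ?_⟩, rfl, hz⟩
  refine huinf.mono fun w hw => ?_
  exact (huz.symm).trans hw

noncomputable def rayAux {G : SimpleGraph V}
    (htough : ∀ X : Set V, X.Finite → Finite (Comps G X))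
    (init : RayState G) : ℕ → RayState G
  | 0 => init
  | n + 1 => (RayState.step htough (rayAux htough init n)).choose

lemma rayAux_spec {G : SimpleGraph V}
    (htough : ∀ X : Set V, X.Finite → Finite (Comps G X))
    (init : RayState G) (n : ℕ) :
    (rayAux htough init (n + 1)).X =
        insert (rayAux htough init n).v (rayAux htough init n).X ∧
      G.Adj (rayAux htough init n).v (rayAux htough init (n + 1)).v :=
  (RayState.step htough (rayAux htough init n)).choose_spec

/-- Every infinite tough graph contains a ray. -/
theorem stmt7 (G : SimpleGraph V) [Infinite V]
    (htough : ∀ X : Set V, X.Finite → Finite (Comps G X)) :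
    ∃ r : ℕ → V, Function.Injective r ∧ ∀ n, G.Adj (r n) (r (n + 1)) := by
  obtain ⟨u, -, huinf⟩ := exists_infinite_comp htough Set.finite_empty
    Set.infinite_univ (fun w _ => Set.notMem_empty w)
  set init : RayState G := ⟨u, ∅, Set.finite_empty, Set.notMem_empty u, huinf⟩
  set st : ℕ → RayState G := rayAux htough init with hst
  refine ⟨fun n => (st n).v, ?_, fun n => (rayAux_spec htough init n).2⟩
  have hmem : ∀ m n, m < n → (st m).v ∈ (st n).X := by
    intro m n hmn
    induction n with
    | zero => omega
    | succ k ih =>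
      rw [(rayAux_spec htough init k).1]
      rcases Nat.lt_succ_iff_lt_or_eq.mp hmn with h | h
      · exact Set.mem_insert_of_mem _ (ih h)
      · subst h; exact Set.mem_insert _ _
  intro m n h
  have h' : (st m).v = (st n).v := h
  by_contra hne
  rcases lt_or_gt_of_ne hne with hlt | hlt
  · exact (st n).hv (h' ▸ hmem m n hlt)
  · exact (st m).hv (h' ▸ hmem n m hlt)
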